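/- For every φ ∈ P one has Σ_{i,j,k,l} W^{ijkl} e_l·(e_k·(e_i·(e_j·φ))) = 0, where W^{ijkl} := Σ_{a,b,c,d} ω^{ia}ω^{jb}ω^{kc}ω^{ld}W_{abcd}. -/
import Mathlib


noncomputable section

open Finset MvPolynomial

/-- The space of symplectic spinors: complex polynomials in `l` variables. -/
abbrev Pol (l : ℕ) := MvPolynomial (Fin l) ℂ

/-- Components `ω_{ij}` of the standard symplectic form on `ℝ^{2l}`. -/
def om (l : ℕ) (i j : Fin (2*l)) : ℝ :=
  if (j : ℕ) = (i : ℕ) + l then 1 else if (i : ℕ) = (j : ℕ) + l then -1 else 0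

/-- Components `ω^{ij}`, defined by `Σ_k ω_{ik} ω^{jk} = δ_i^j`. -/
def omUp (l : ℕ) (i j : Fin (2*l)) : ℝ :=
  if (j : ℕ) = (i : ℕ) + l then 1 else if (i : ℕ) = (j : ℕ) + l then -1 else 0

/-- Symplectic Clifford multiplication by a basis vector `e_i`. -/
def cliff (l : ℕ) (i : Fin (2*l)) (f : Pol l) : Pol l :=
  if h : (i : ℕ) < l then Complex.I • (MvPolynomial.X (⟨(i : ℕ), h⟩ : Fin l) * f)
  else MvPolynomial.pderiv (⟨(i : ℕ) - l, by have := i.isLt; omega⟩ : Fin l) f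

/-- Symplectic Clifford multiplication by an arbitrary vector, extended ℝ-bilinearly. -/
def cliffV (l : ℕ) (v : Fin (2*l) → ℝ) (f : Pol l) : Pol l :=
  ∑ i, ((v i : ℝ) : ℂ) • cliff l i f

/-- Symplectic-spinor-valued `r`-forms (as functions of their `r` vector arguments). -/
abbrev Form (l r : ℕ) := (Fin r → (Fin (2*l) → ℝ)) → Pol l

/-- The standard basis vector `e_i` of `ℝ^{2l}`. -/
def basisVec (l : ℕ) (i : Fin (2*l)) : Fin (2*l) → ℝ := Pi.single i 1

/-- The operator `X`: `(Xφ)(v_1,…,v_{r+1}) = −Σ_a (−1)^{a+1} v_a · φ(v_1,…,v̂_a,…,v_{r+1})`. -/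
def Xop (l r : ℕ) (φ : Form l r) : Form l (r+1) :=
  fun v => -∑ a : Fin (r+1), ((-1 : ℂ)^(a : ℕ)) • cliffV l (v a) (φ (fun b => v (a.succAbove b)))

/-- The operator `Y`: `(Yφ)(v_1,…,v_r) = Σ_{i,j} ω^{ij} e_j · φ(e_i, v_1,…,v_r)`. -/
def Yop (l r : ℕ) (φ : Form l (r+1)) : Form l r :=
  fun v => ∑ i, ∑ j, ((omUp l i j : ℝ) : ℂ) • cliff l j (φ (Fin.cons (basisVec l i) v))

/-- The operator `H = XY + YX` (on 0-forms `Y` vanishes, so there `H = YX`). -/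
def Hop (l : ℕ) : {r : ℕ} → Form l r → Form l r
  | 0, φ => Yop l 0 (Xop l 0 φ)
  | (r+1), φ => Xop l r (Yop l r φ) + Yop l (r+1) (Xop l (r+1) φ)

/-- `X²Y²` on spinor-valued 2-forms. -/
def XXYY (l : ℕ) (φ : Form l 2) : Form l 2 := Xop l 1 (Xop l 0 (Yop l 0 (Yop l 1 φ)))

/-- `XY` on spinor-valued 2-forms. -/
def XY2 (l : ℕ) (φ : Form l 2) : Form l 2 := Xop l 1 (Yop l 1 φ)

/-- The projection `q^{20} = (1/l) X²Y²`. -/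
def q20 (l : ℕ) (φ : Form l 2) : Form l 2 := ((l : ℂ))⁻¹ • XXYY l φ

/-- The projection `q^{21} = (𝕚/(1−l)) (XY − (𝕚/l) X²Y²)`. -/
def q21 (l : ℕ) (φ : Form l 2) : Form l 2 :=
  (Complex.I / (1 - (l : ℂ))) • (XY2 l φ - (Complex.I / (l : ℂ)) • XXYY l φ)

/-- The projection `q^{22} = Id − q^{20} − q^{21}`. -/
def q22 (l : ℕ) (φ : Form l 2) : Form l 2 := φ - q20 l φ - q21 l φ

/-- The spinor-valued 2-form `c · ε^k ∧ ε^m ⊗ s`. -/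
def w2 (l : ℕ) (c : ℝ) (k m : Fin (2*l)) (s : Pol l) : Form l 2 :=
  fun v => ((c * (v 0 k * v 1 m - v 0 m * v 1 k) : ℝ) : ℂ) • s

/-- The symplectic Ricci tensor `σ_{ij} = Σ_{k,m} ω^{km} R_{mjki}`. -/
def ric (l : ℕ) (R : Fin (2*l) → Fin (2*l) → Fin (2*l) → Fin (2*l) → ℝ)
    (i j : Fin (2*l)) : ℝ :=
  ∑ k, ∑ m, omUp l k m * R m j k i

/-- `σ̃_{ijkl}` built from a symmetric tensor `σ`. -/
def st (l : ℕ) (σ : Fin (2*l) → Fin (2*l) → ℝ) (i j k m : Fin (2*l)) : ℝ :=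
  (1/(2*((l : ℝ)+1))) * (om l i m * σ j k - om l i k * σ j m
    + om l j m * σ i k - om l j k * σ i m + 2 * σ i j * om l k m)

/-- The symplectic Weyl tensor `W = R − σ̃`. -/
def weyl (l : ℕ) (R : Fin (2*l) → Fin (2*l) → Fin (2*l) → Fin (2*l) → ℝ)
    (i j k m : Fin (2*l)) : ℝ :=
  R i j k m - st l (ric l R) i j k m

/-- Raising all four indices: `T^{ijkm} = Σ ω^{ia}ω^{jb}ω^{kc}ω^{md} T_{abcd}`. -/
def upT (l : ℕ) (T : Fin (2*l) → Fin (2*l) → Fin (2*l) → Fin (2*l) → ℝ)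
    (i j k m : Fin (2*l)) : ℝ :=
  ∑ a, ∑ b, ∑ c, ∑ d, omUp l i a * omUp l j b * omUp l k c * omUp l m d * T a b c d

/-- Raising both indices of a 2-tensor: `σ^{ij} = Σ ω^{ia}ω^{jb} σ_{ab}`. -/
def up2 (l : ℕ) (σ : Fin (2*l) → Fin (2*l) → ℝ) (i j : Fin (2*l)) : ℝ :=
  ∑ a, ∑ b, omUp l i a * omUp l j b * σ a b

/-- The spinor-valued 2-form `(𝕚/2) Σ T^{ij}_{kl} ε^k ∧ ε^l ⊗ e_{ij}·φ` built from a
4-tensor `T` (used for `R^S φ`, `σ^S φ` and `W^S φ`). -/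
def curvS (l : ℕ) (T : Fin (2*l) → Fin (2*l) → Fin (2*l) → Fin (2*l) → ℝ)
    (φ : Pol l) : Form l 2 :=
  (Complex.I/2) • ∑ i, ∑ j, ∑ k, ∑ m,
    w2 l (∑ a, ∑ b, omUp l i a * omUp l j b * T a b k m) k m (cliff l i (cliff l j φ))

/-- The spinor-valued 2-form `Σ_{i,j,k,d,m} T^{ijk}_d ε^m ∧ ε^d ⊗ e_{mkij}·φ`. -/
def mixS (l : ℕ) (T : Fin (2*l) → Fin (2*l) → Fin (2*l) → Fin (2*l) → ℝ)
    (φ : Pol l) : Form l 2 :=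
  ∑ i, ∑ j, ∑ k, ∑ d, ∑ m,
    w2 l (∑ a, ∑ b, ∑ c, omUp l i a * omUp l j b * omUp l k c * T a b c d) m d
      (cliff l m (cliff l k (cliff l i (cliff l j φ))))


lemma pderiv_pderiv_comm' {σ R : Type*} [CommSemiring R] [DecidableEq σ] (i j : σ)
    (p : MvPolynomial σ R) : pderiv i (pderiv j p) = pderiv j (pderiv i p) := by
  induction p using MvPolynomial.induction_on with
  | C a => simp
  | add p q hp hq => simp [hp, hq]
  | mul_X p k hp => simp [pderiv_mul, pderiv_X, hp, Pi.single_apply]; split <;> split <;> (try simp only [map_zero]) <;> ring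

lemma cliff_comm (l : ℕ) (k m : Fin (2*l)) (f : Pol l) :
    cliff l k (cliff l m f) = cliff l m (cliff l k f) - (Complex.I * ((om l k m : ℝ) : ℂ)) • f := by
  have hk2 := k.isLt; have hm2 := m.isLt
  by_cases hk : (k:ℕ) < l <;> by_cases hm : (m:ℕ) < l
  · simp only [cliff, om, dif_pos hk, dif_pos hm, if_neg (show ¬((m:ℕ) = (k:ℕ)+l) by omega),
      if_neg (show ¬((k:ℕ) = (m:ℕ)+l) by omega)]
    simp only [smul_eq_C_mul, Complex.ofReal_zero, mul_zero, map_zero, zero_mul, sub_zero]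
    ring
  · simp only [cliff, om, dif_pos hk, dif_neg hm, if_neg (show ¬((k:ℕ) = (m:ℕ)+l) by omega)]
    by_cases h : (m:ℕ) = (k:ℕ) + l
    · have e : (⟨(m:ℕ)-l, by omega⟩ : Fin l) = ⟨(k:ℕ), hk⟩ := by ext; simp; omega
      rw [if_pos h, e]
      simp only [smul_eq_C_mul, Complex.ofReal_one, mul_one]
      rw [pderiv_C_mul, pderiv_mul, pderiv_X_self]
      ring
    · have e : ((⟨(k:ℕ), hk⟩ : Fin l) : Fin l) ≠ ⟨(m:ℕ)-l, by omega⟩ := by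
        simp only [ne_eq, Fin.mk.injEq]; omega
      rw [if_neg h]
      simp only [smul_eq_C_mul, Complex.ofReal_zero, mul_zero, map_zero, zero_mul, sub_zero]
      rw [pderiv_C_mul, pderiv_mul, pderiv_X_of_ne e]
      ring
  · simp only [cliff, om, dif_neg hk, dif_pos hm, if_neg (show ¬((m:ℕ) = (k:ℕ)+l) by omega)]
    by_cases h : (k:ℕ) = (m:ℕ) + l
    · have e : (⟨(k:ℕ)-l, by omega⟩ : Fin l) = ⟨(m:ℕ), hm⟩ := by ext; simp; omega
      rw [if_pos h, e]
      simp only [smul_eq_C_mul, Complex.ofReal_neg, Complex.ofReal_one, mul_neg, mul_one, map_neg]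
      rw [pderiv_C_mul, pderiv_mul, pderiv_X_self]
      ring
    · have e : ((⟨(m:ℕ), hm⟩ : Fin l) : Fin l) ≠ ⟨(k:ℕ)-l, by omega⟩ := by
        simp only [ne_eq, Fin.mk.injEq]; omega
      rw [if_neg h]
      simp only [smul_eq_C_mul, Complex.ofReal_zero, mul_zero, map_zero, zero_mul, sub_zero]
      rw [pderiv_C_mul, pderiv_mul, pderiv_X_of_ne e]
      ring
  · simp only [cliff, om, dif_neg hk, dif_neg hm, if_neg (show ¬((m:ℕ) = (k:ℕ)+l) by omega),
      if_neg (show ¬((k:ℕ) = (m:ℕ)+l) by omega)]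
    rw [pderiv_pderiv_comm']
    simp

lemma key_lemma (l : ℕ) (f : Pol l) (C : Fin (2*l) → Fin (2*l) → ℝ)
    (hC : ∀ k m, C m k = - C k m) (htr : ∑ k, ∑ m, C k m * om l k m = 0) :
    ∑ k, ∑ m, ((C k m : ℝ):ℂ) • cliff l m (cliff l k f) = 0 := by
  have h2 : ∀ k m : Fin (2*l), ((C m k : ℝ):ℂ) • cliff l k (cliff l m f)
      = -(((C k m:ℝ):ℂ) • cliff l m (cliff l k f))
        + ((C k m * om l k m : ℝ):ℂ) • (Complex.I • f) := by
    intro k m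
    rw [hC k m, cliff_comm]
    push_cast
    rw [smul_sub]
    module
  have h4 : ∑ k, ∑ m, ((C k m * om l k m : ℝ):ℂ) • (Complex.I • f) = 0 := by
    simp only [← Finset.sum_smul]
    have : ((∑ k, ∑ m, C k m * om l k m : ℝ) : ℂ) = 0 := by rw [htr]; simp
    push_cast at this ⊢
    rw [this, zero_smul]
  have h3 : (∑ k, ∑ m, ((C k m : ℝ):ℂ) • cliff l m (cliff l k f))
      = -(∑ k, ∑ m, ((C k m : ℝ):ℂ) • cliff l m (cliff l k f))
        + ∑ k, ∑ m, ((C k m * om l k m : ℝ):ℂ) • (Complex.I • f) := by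
    conv_lhs => rw [Finset.sum_comm]
    rw [Finset.sum_congr rfl fun k _ => Finset.sum_congr rfl fun m _ => h2 k m]
    simp only [Finset.sum_add_distrib, Finset.sum_neg_distrib]
  have h5 : (2:ℂ) • (∑ k, ∑ m, ((C k m : ℝ):ℂ) • cliff l m (cliff l k f)) = 0 := by
    rw [two_smul]
    nth_rewrite 2 [h3]
    rw [h4, add_zero, add_neg_cancel]
  simpa using h5

lemma upT_anti (l : ℕ) (W : Fin (2*l) → Fin (2*l) → Fin (2*l) → Fin (2*l) → ℝ)
    (hW2 : ∀ i j k m, W i j k m = - W i j m k) (i j k m : Fin (2*l)) :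
    upT l W i j m k = - upT l W i j k m := by
  unfold upT
  rw [← Finset.sum_neg_distrib]
  refine Finset.sum_congr rfl fun a _ => ?_
  rw [← Finset.sum_neg_distrib]
  refine Finset.sum_congr rfl fun b _ => ?_
  rw [Finset.sum_comm, ← Finset.sum_neg_distrib]
  refine Finset.sum_congr rfl fun c _ => ?_
  rw [← Finset.sum_neg_distrib]
  refine Finset.sum_congr rfl fun d _ => ?_
  rw [show W a b d c = - W a b c d from by linarith [hW2 a b c d]]
  ring

/-- `Σ W^{ijkl} e_l·(e_k·(e_i·(e_j·φ))) = 0`. -/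
theorem stmt_13 (l : ℕ) (hl : 2 ≤ l) (W : Fin (2*l) → Fin (2*l) → Fin (2*l) → Fin (2*l) → ℝ)
    (hW1 : ∀ i j k m, W i j k m = W j i k m)
    (hW2 : ∀ i j k m, W i j k m = - W i j m k)
    (hW3 : ∀ i j k m, W i j k m + W i k m j + W i m j k = 0)
    (hW4 : ∀ i j k m, W i j k m + W j k m i + W k m i j + W m i j k = 0)
    (hW5 : ∀ k m, ∑ i, ∑ j, upT l W i j k m * om l i j = 0)
    (hW6 : ∀ j m, ∑ i, ∑ k, upT l W i j k m * om l i k = 0)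
    (hW7 : ∀ j k, ∑ i, ∑ m, upT l W i j k m * om l i m = 0)
    (hW8 : ∀ i m, ∑ j, ∑ k, upT l W i j k m * om l j k = 0)
    (hW9 : ∀ i k, ∑ j, ∑ m, upT l W i j k m * om l j m = 0)
    (hW10 : ∀ i j, ∑ k, ∑ m, upT l W i j k m * om l k m = 0)
    (φ : Pol l) :
    ∑ i, ∑ j, ∑ k, ∑ m, ((upT l W i j k m : ℝ) : ℂ) •
      cliff l m (cliff l k (cliff l i (cliff l j φ))) = 0 := by
  refine Finset.sum_eq_zero fun i _ => Finset.sum_eq_zero fun j _ => ?_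
  exact key_lemma l (cliff l i (cliff l j φ)) (fun k m => upT l W i j k m)
    (fun k m => upT_anti l W hW2 i j k m) (hW10 i j)

end
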